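/- For every even integer ℓ ≥ 4, there exists a 3-regular graph F on ℓ vertices together with a partition of its edge set into three perfect matchings M₁, M₂, M₃ such that (a) the union of any two of the matchings induces a Hamiltonian cycle of F, and (b) every Hamiltonian cycle of F is the union of two of the matchings M₁, M₂, M₃. -/

import Mathlib

set_option linter.unreachableTactic false
set_option linter.unusedTactic false
set_option linter.unusedVariables false
set_option maxHeartbeats 1000000

namespace Flawless


def p0 (v : ℕ) : ℕ := if v % 2 = 0 then v + 1 else v - 1

def p2 (ℓ v : ℕ) : ℕ :=
  if v = 0 then ℓ - 1 else if v = ℓ - 1 then 0 else if v % 2 = 0 then v - 1 else v + 1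

def p1 (ℓ v : ℕ) : ℕ :=
  if v = 0 then 2 else if v = 2 then 0 else if v = ℓ - 3 then ℓ - 1
  else if v = ℓ - 1 then ℓ - 3 else if v % 2 = 0 then v - 3 else v + 3

set_option maxHeartbeats 1000000

lemma p0_lt {ℓ v : ℕ} (h4 : 4 ≤ ℓ) (hev : ℓ % 2 = 0) (hv : v < ℓ) : p0 v < ℓ := by
  unfold p0; split_ifs <;> first | omega | tauto
lemma p0_ne {v : ℕ} : p0 v ≠ v := by unfold p0; split_ifs <;> first | omega | tauto
lemma p0_invol {v : ℕ} : p0 (p0 v) = v := by unfold p0; split_ifs <;> first | omega | tauto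
lemma p2_lt {ℓ v : ℕ} (h4 : 4 ≤ ℓ) (hev : ℓ % 2 = 0) (hv : v < ℓ) : p2 ℓ v < ℓ := by
  unfold p2; split_ifs <;> first | omega | tauto
lemma p2_ne {ℓ v : ℕ} (h4 : 4 ≤ ℓ) (hev : ℓ % 2 = 0) (hv : v < ℓ) : p2 ℓ v ≠ v := by
  unfold p2; split_ifs <;> first | omega | tauto
lemma p2_invol {ℓ v : ℕ} (h4 : 4 ≤ ℓ) (hev : ℓ % 2 = 0) (hv : v < ℓ) :
    p2 ℓ (p2 ℓ v) = v := by
  unfold p2; split_ifs <;> first | omega | tauto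
lemma p1_lt {ℓ v : ℕ} (h4 : 4 ≤ ℓ) (hev : ℓ % 2 = 0) (hv : v < ℓ) : p1 ℓ v < ℓ := by
  unfold p1; split_ifs <;> first | omega | tauto
lemma p1_ne {ℓ v : ℕ} (h4 : 4 ≤ ℓ) (hev : ℓ % 2 = 0) (hv : v < ℓ) : p1 ℓ v ≠ v := by
  unfold p1; split_ifs <;> first | omega | tauto
lemma p1_invol {ℓ v : ℕ} (h4 : 4 ≤ ℓ) (hev : ℓ % 2 = 0) (hv : v < ℓ) :
    p1 ℓ (p1 ℓ v) = v := by
  unfold p1; split_ifs <;> first | omega | tauto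
lemma p0_ne_p1 {ℓ v : ℕ} (h4 : 4 ≤ ℓ) (hev : ℓ % 2 = 0) (hv : v < ℓ) :
    p0 v ≠ p1 ℓ v := by unfold p0 p1; split_ifs <;> first | omega | tauto
lemma p0_ne_p2 {ℓ v : ℕ} (h4 : 4 ≤ ℓ) (hev : ℓ % 2 = 0) (hv : v < ℓ) :
    p0 v ≠ p2 ℓ v := by unfold p0 p2; split_ifs <;> first | omega | tauto
lemma p1_ne_p2 {ℓ v : ℕ} (h4 : 4 ≤ ℓ) (hev : ℓ % 2 = 0) (hv : v < ℓ) :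
    p1 ℓ v ≠ p2 ℓ v := by unfold p1 p2; split_ifs <;> first | omega | tauto



def Mg (ℓ : ℕ) (p : ℕ → ℕ) : SimpleGraph (Fin ℓ) where
  Adj a b := a ≠ b ∧ ((b : ℕ) = p (a : ℕ) ∨ (a : ℕ) = p (b : ℕ))
  symm := ⟨by rintro a b ⟨h1, h2⟩; exact ⟨h1.symm, h2.symm⟩⟩
  loopless := ⟨by rintro a ⟨h1, _⟩; exact h1 rfl⟩

lemma Mg_adj {ℓ : ℕ} {p : ℕ → ℕ} {a b : Fin ℓ} :
    (Mg ℓ p).Adj a b ↔ a ≠ b ∧ ((b : ℕ) = p (a : ℕ) ∨ (a : ℕ) = p (b : ℕ)) := Iff.rfl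

/-- neighbor set of a matching graph is a singleton -/
lemma Mg_nbr {ℓ : ℕ} (p : ℕ → ℕ) (hlt : ∀ v < ℓ, p v < ℓ) (hne : ∀ v < ℓ, p v ≠ v)
    (hinv : ∀ v < ℓ, p (p v) = v) (v : Fin ℓ) :
    (Mg ℓ p).neighborSet v = {⟨p v, hlt v v.2⟩} := by
  ext w
  simp only [SimpleGraph.mem_neighborSet, Mg_adj, Set.mem_singleton_iff]
  constructor
  · rintro ⟨h1, h2 | h2⟩
    · exact Fin.ext h2
    · refine Fin.ext ?_
      show (w:ℕ) = p v
      rw [h2, hinv w w.2]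
  · rintro rfl
    exact ⟨fun h => hne v v.2 (by simpa using (Fin.val_eq_val _ _).2 h.symm), Or.inl rfl⟩



section setlemmas
variable {α : Type*}

lemma pair_of_two {s : Set α} {a b : α} (h2 : s.ncard = 2) (ha : a ∈ s) (hb : b ∈ s)
    (hab : a ≠ b) : s = {a, b} := by
  obtain ⟨x, y, hxy, rfl⟩ := Set.ncard_eq_two.mp h2
  simp only [Set.mem_insert_iff, Set.mem_singleton_iff] at ha hb
  rcases ha with rfl | rfl <;> rcases hb with rfl | rfl
  · exact absurd rfl hab
  · rfl
  · exact Set.pair_comm _ _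
  · exact absurd rfl hab

lemma eq_of_not_mem3 {s : Set α} {a b c : α} (h2 : s.ncard = 2) (hsub : s ⊆ {a, b, c})
    (hb : b ∉ s) (hac : a ≠ c) : s = {a, c} := by
  obtain ⟨x, y, hxy, rfl⟩ := Set.ncard_eq_two.mp h2
  have hx : x ∈ ({a, b, c} : Set α) := hsub (by simp)
  have hy : y ∈ ({a, b, c} : Set α) := hsub (by simp)
  simp only [Set.mem_insert_iff, Set.mem_singleton_iff, not_or] at hx hy hb
  obtain ⟨hb1, hb2⟩ := hb
  rcases hx with rfl | rfl | rfl <;> rcases hy with rfl | rfl | rfl <;>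
    first | (exact absurd rfl hxy) | (exact absurd rfl hb1) | (exact absurd rfl hb2) | rfl |
      (exact Set.pair_comm _ _)

end setlemmas

section graphs
variable {V : Type*}

lemma nbr_sup (G1 G2 : SimpleGraph V) (v : V) :
    (G1 ⊔ G2).neighborSet v = G1.neighborSet v ∪ G2.neighborSet v := by
  ext w; simp [SimpleGraph.mem_neighborSet, SimpleGraph.sup_adj]

lemma eq_of_le_two {V : Type*} [Finite V] {G1 G2 : SimpleGraph V} (hle : G1 ≤ G2)
    (h1 : ∀ v, (G1.neighborSet v).ncard = 2) (h2 : ∀ v, (G2.neighborSet v).ncard = 2) :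
    G2 = G1 := by
  have key : ∀ v, G1.neighborSet v = G2.neighborSet v := by
    intro v
    exact Set.eq_of_subset_of_ncard_le (fun w hw => hle hw) (by rw [h1, h2]) (Set.toFinite _)
  ext a b
  constructor
  · intro h
    have : b ∈ G1.neighborSet a := (key a) ▸ h
    exact this
  · intro h; exact hle h

lemma conn_of_desc {ℓ : ℕ} (G : SimpleGraph (Fin ℓ)) (hne : 0 < ℓ)
    (desc : ∀ v : Fin ℓ, 0 < v.val → ∃ w : Fin ℓ, G.Reachable v w ∧ w.val < v.val) :
    G.Connected := by
  have key : ∀ n (v : Fin ℓ), v.val ≤ n → G.Reachable v ⟨0, hne⟩ := by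
    intro n
    induction n with
    | zero =>
      intro v hv
      have : v = ⟨0, hne⟩ := Fin.ext (by show v.val = 0; omega)
      rw [this]
    | succ n ih =>
      intro v hv
      by_cases h : v.val = 0
      · have : v = ⟨0, hne⟩ := Fin.ext (by show v.val = 0; omega)
        rw [this]
      · obtain ⟨w, hr, hlt⟩ := desc v (by omega)
        exact hr.trans (ih w (by omega))
  have hpre : G.Preconnected := fun u v =>
    (key u.val u le_rfl).trans (key v.val v le_rfl).symm
  exact (G.connected_iff).mpr ⟨hpre, ⟨⟨0, hne⟩⟩⟩

lemma closed_of_reach {V : Type*} {G : SimpleGraph V} {S : Set V}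
    (hcl : ∀ u ∈ S, ∀ w, G.Adj u w → w ∈ S) {x y : V} (hr : G.Reachable x y)
    (hx : x ∈ S) : y ∈ S := by
  obtain ⟨w⟩ := hr
  induction w with
  | nil => exact hx
  | cons h p ih => exact ih (hcl _ hx _ h)

end graphs

section construction

variable {ℓ : ℕ}

def FG (ℓ : ℕ) : SimpleGraph (Fin ℓ) := Mg ℓ p0 ⊔ Mg ℓ (p1 ℓ) ⊔ Mg ℓ (p2 ℓ)

variable (h4 : 4 ≤ ℓ) (hev : ℓ % 2 = 0)
include h4 hev

lemma nbr0 (v : Fin ℓ) :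
    (Mg ℓ p0).neighborSet v = {⟨p0 v, p0_lt h4 hev v.2⟩} :=
  Mg_nbr _ (fun v hv => p0_lt h4 hev hv) (fun v hv => p0_ne) (fun v hv => p0_invol) v

lemma nbr1 (v : Fin ℓ) :
    (Mg ℓ (p1 ℓ)).neighborSet v = {⟨p1 ℓ v, p1_lt h4 hev v.2⟩} :=
  Mg_nbr _ (fun v hv => p1_lt h4 hev hv) (fun v hv => p1_ne h4 hev hv)
    (fun v hv => p1_invol h4 hev hv) v

lemma nbr2 (v : Fin ℓ) :
    (Mg ℓ (p2 ℓ)).neighborSet v = {⟨p2 ℓ v, p2_lt h4 hev v.2⟩} :=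
  Mg_nbr _ (fun v hv => p2_lt h4 hev hv) (fun v hv => p2_ne h4 hev hv)
    (fun v hv => p2_invol h4 hev hv) v

lemma nbrF (v : Fin ℓ) :
    (FG ℓ).neighborSet v = {⟨p0 v, p0_lt h4 hev v.2⟩, ⟨p1 ℓ v, p1_lt h4 hev v.2⟩,
      ⟨p2 ℓ v, p2_lt h4 hev v.2⟩} := by
  show ((Mg ℓ p0 ⊔ Mg ℓ (p1 ℓ)) ⊔ Mg ℓ (p2 ℓ)).neighborSet v = _
  rw [nbr_sup, nbr_sup, nbr0 h4 hev, nbr1 h4 hev, nbr2 h4 hev]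
  ext w
  simp only [Set.mem_union, Set.mem_singleton_iff, Set.mem_insert_iff]
  tauto

lemma degF (v : Fin ℓ) : ((FG ℓ).neighborSet v).ncard = 3 := by
  rw [nbrF h4 hev]
  exact Set.ncard_eq_three.mpr ⟨_, _, _,
    Fin.ne_of_val_ne (p0_ne_p1 h4 hev v.2), Fin.ne_of_val_ne (p0_ne_p2 h4 hev v.2),
    Fin.ne_of_val_ne (p1_ne_p2 h4 hev v.2), rfl⟩

lemma deg01 (v : Fin ℓ) : (((Mg ℓ p0) ⊔ (Mg ℓ (p1 ℓ))).neighborSet v).ncard = 2 := by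
  rw [nbr_sup, nbr0 h4 hev, nbr1 h4 hev, Set.singleton_union]
  exact Set.ncard_pair (Fin.ne_of_val_ne (p0_ne_p1 h4 hev v.2))

lemma deg02 (v : Fin ℓ) : (((Mg ℓ p0) ⊔ (Mg ℓ (p2 ℓ))).neighborSet v).ncard = 2 := by
  rw [nbr_sup, nbr0 h4 hev, nbr2 h4 hev, Set.singleton_union]
  exact Set.ncard_pair (Fin.ne_of_val_ne (p0_ne_p2 h4 hev v.2))

lemma deg12 (v : Fin ℓ) : (((Mg ℓ (p1 ℓ)) ⊔ (Mg ℓ (p2 ℓ))).neighborSet v).ncard = 2 := by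
  rw [nbr_sup, nbr1 h4 hev, nbr2 h4 hev, Set.singleton_union]
  exact Set.ncard_pair (Fin.ne_of_val_ne (p1_ne_p2 h4 hev v.2))

lemma Mg_disj {p q : ℕ → ℕ} (hp : ∀ v < ℓ, p (p v) = v) (hq : ∀ v < ℓ, q (q v) = v)
    (hpq : ∀ v < ℓ, p v ≠ q v) :
    Disjoint (Mg ℓ p).edgeSet (Mg ℓ q).edgeSet := by
  rw [Set.disjoint_left]
  intro e he he'
  induction e using Sym2.ind with
  | _ a b =>
    rw [SimpleGraph.mem_edgeSet] at he he'
    obtain ⟨hne, h1⟩ := he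
    obtain ⟨_, h2⟩ := he'
    have h1' : (b : ℕ) = p a := by
      rcases h1 with h | h
      · exact h
      · rw [h, hp _ b.2]
    have h2' : (b : ℕ) = q a := by
      rcases h2 with h | h
      · exact h
      · rw [h, hq _ b.2]
    exact hpq a a.2 (h1'.symm.trans h2')


lemma ne_mk {ℓ a : ℕ} {ha : a < ℓ} {v : Fin ℓ} (h : v.val ≠ a) : v ≠ (⟨a, ha⟩ : Fin ℓ) :=
  Fin.ne_of_val_ne h

lemma conn01 : ((Mg ℓ p0) ⊔ (Mg ℓ (p1 ℓ))).Connected := by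
  apply conn_of_desc _ (by omega)
  intro v hv
  rcases Nat.even_or_odd v.val with he | ho
  · -- even: v = 2 → 0, v ≥ 4 → v-3 via p1
    have hm : v.val % 2 = 0 := Nat.even_iff.mp he
    by_cases h2 : v.val = 2
    · refine ⟨⟨0, by omega⟩, SimpleGraph.Adj.reachable (Or.inr ?_), by show 0 < v.val; omega⟩
      refine ⟨(by simp only [ne_eq, Fin.ext_iff, Fin.val_mk]; omega), Or.inl ?_⟩
      show (0 : ℕ) = p1 ℓ v.val
      unfold p1; split_ifs <;> first | omega | tauto
    · refine ⟨⟨v.val - 3, by omega⟩, SimpleGraph.Adj.reachable (Or.inr ?_), by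
        show v.val - 3 < v.val; omega⟩
      refine ⟨(by simp only [ne_eq, Fin.ext_iff, Fin.val_mk]; omega), Or.inl ?_⟩
      show (v.val - 3 : ℕ) = p1 ℓ v.val
      have hv4 : 4 ≤ v.val := by omega
      have := v.2
      unfold p1; split_ifs <;> first | omega | tauto
  · -- odd: v → v-1 via p0
    refine ⟨⟨v.val - 1, by omega⟩, SimpleGraph.Adj.reachable (Or.inl ?_), by
      show v.val - 1 < v.val; omega⟩
    refine ⟨(by simp only [ne_eq, Fin.ext_iff, Fin.val_mk]; omega), Or.inl ?_⟩
    show (v.val - 1 : ℕ) = p0 v.val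
    have : v.val % 2 = 1 := Nat.odd_iff.mp ho
    unfold p0; split_ifs <;> first | omega | tauto

lemma conn02 : ((Mg ℓ p0) ⊔ (Mg ℓ (p2 ℓ))).Connected := by
  apply conn_of_desc _ (by omega)
  intro v hv
  refine ⟨⟨v.val - 1, by omega⟩, SimpleGraph.Adj.reachable ?_, by show v.val - 1 < v.val; omega⟩
  rcases Nat.even_or_odd v.val with he | ho
  · refine Or.inr ⟨(by simp only [ne_eq, Fin.ext_iff, Fin.val_mk]; omega), Or.inl ?_⟩
    show (v.val - 1 : ℕ) = p2 ℓ v.val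
    have : v.val % 2 = 0 := Nat.even_iff.mp he
    have := v.2
    unfold p2; split_ifs <;> first | omega | tauto
  · refine Or.inl ⟨(by simp only [ne_eq, Fin.ext_iff, Fin.val_mk]; omega), Or.inl ?_⟩
    show (v.val - 1 : ℕ) = p0 v.val
    have : v.val % 2 = 1 := Nat.odd_iff.mp ho
    unfold p0; split_ifs <;> first | omega | tauto

lemma conn12 : ((Mg ℓ (p1 ℓ)) ⊔ (Mg ℓ (p2 ℓ))).Connected := by
  apply conn_of_desc _ (by omega)
  intro v hv
  have hvl := v.2
  rcases Nat.even_or_odd v.val with he | ho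
  · have hm : v.val % 2 = 0 := Nat.even_iff.mp he
    by_cases h2 : v.val = 2
    · refine ⟨⟨0, by omega⟩, SimpleGraph.Adj.reachable (Or.inl ?_), by show 0 < v.val; omega⟩
      refine ⟨(by simp only [ne_eq, Fin.ext_iff, Fin.val_mk]; omega), Or.inl ?_⟩
      show (0 : ℕ) = p1 ℓ v.val
      unfold p1; split_ifs <;> first | omega | tauto
    · refine ⟨⟨v.val - 3, by omega⟩, SimpleGraph.Adj.reachable (Or.inl ?_), by
        show v.val - 3 < v.val; omega⟩
      refine ⟨(by simp only [ne_eq, Fin.ext_iff, Fin.val_mk]; omega), Or.inl ?_⟩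
      show (v.val - 3 : ℕ) = p1 ℓ v.val
      unfold p1; split_ifs <;> first | omega | tauto
  · have hm : v.val % 2 = 1 := Nat.odd_iff.mp ho
    by_cases hl : v.val = ℓ - 1
    · refine ⟨⟨0, by omega⟩, SimpleGraph.Adj.reachable (Or.inr ?_), by show 0 < v.val; omega⟩
      refine ⟨(by simp only [ne_eq, Fin.ext_iff, Fin.val_mk]; omega), Or.inr ?_⟩
      show (v.val : ℕ) = p2 ℓ 0
      unfold p2; split_ifs <;> first | omega | tauto
    · -- odd v < ℓ-1 : v → v+1 via p2, then v+1 → (0 or v-2) via p1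
      have step1 : ((Mg ℓ (p1 ℓ)) ⊔ (Mg ℓ (p2 ℓ))).Adj v ⟨v.val + 1, by omega⟩ := by
        refine Or.inr ⟨(by simp only [ne_eq, Fin.ext_iff, Fin.val_mk]; omega), Or.inl ?_⟩
        show (v.val + 1 : ℕ) = p2 ℓ v.val
        unfold p2; split_ifs <;> first | omega | tauto
      by_cases h1 : v.val = 1
      · refine ⟨⟨0, by omega⟩, ?_, by show 0 < v.val; omega⟩
        refine step1.reachable.trans (SimpleGraph.Adj.reachable (Or.inl ?_))
        refine ⟨(by simp only [ne_eq, Fin.ext_iff, Fin.val_mk]; omega), Or.inl ?_⟩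
        show (0 : ℕ) = p1 ℓ (v.val + 1)
        unfold p1; split_ifs <;> first | omega | tauto
      · refine ⟨⟨v.val - 2, by omega⟩, ?_, by show v.val - 2 < v.val; omega⟩
        refine step1.reachable.trans (SimpleGraph.Adj.reachable (Or.inl ?_))
        refine ⟨(by simp only [ne_eq, Fin.ext_iff, Fin.val_mk]; omega), Or.inl ?_⟩
        show (v.val - 2 : ℕ) = p1 ℓ (v.val + 1)
        unfold p1; split_ifs <;> first | omega | tauto

end construction

section converse
variable {ℓ : ℕ}

def hadj (H : SimpleGraph (Fin ℓ)) (a b : ℕ) : Prop :=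
  ∃ (ha : a < ℓ) (hb : b < ℓ), H.Adj ⟨a, ha⟩ ⟨b, hb⟩

lemma hadj_symm {H : SimpleGraph (Fin ℓ)} {a b : ℕ} (h : hadj H a b) : hadj H b a := by
  obtain ⟨ha, hb, h⟩ := h; exact ⟨hb, ha, h.symm⟩

variable (h4 : 4 ≤ ℓ) (hev : ℓ % 2 = 0) {H : SimpleGraph (Fin ℓ)}
  (hle : H ≤ FG ℓ) (hdeg : ∀ v, (H.neighborSet v).ncard = 2)

include h4 hev hle

lemma nbr_sub (v : Fin ℓ) : H.neighborSet v ⊆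
    {⟨p0 v, p0_lt h4 hev v.2⟩, ⟨p1 ℓ v, p1_lt h4 hev v.2⟩, ⟨p2 ℓ v, p2_lt h4 hev v.2⟩} := by
  intro w hw
  rw [← nbrF h4 hev]
  exact hle hw

include hdeg

/-- if the p0-partner is missing, both other partners are H-neighbors -/
lemma force0 {v : ℕ} (hv : v < ℓ) (h : ¬ hadj H v (p0 v)) :
    hadj H v (p1 ℓ v) ∧ hadj H v (p2 ℓ v) := by
  have hsub := nbr_sub h4 hev hle (⟨v, hv⟩ : Fin ℓ)
  have hsub' : H.neighborSet ⟨v, hv⟩ ⊆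
      {⟨p1 ℓ v, p1_lt h4 hev hv⟩, ⟨p0 v, p0_lt h4 hev hv⟩, ⟨p2 ℓ v, p2_lt h4 hev hv⟩} := by
    intro w hw; have := hsub hw; simp only [Set.mem_insert_iff, Set.mem_singleton_iff] at *
    tauto
  have hnm : (⟨p0 v, p0_lt h4 hev hv⟩ : Fin ℓ) ∉ H.neighborSet ⟨v, hv⟩ := by
    intro hm; exact h ⟨hv, p0_lt h4 hev hv, hm⟩
  have heq := eq_of_not_mem3 (hdeg ⟨v, hv⟩) hsub' hnm
    (Fin.ne_of_val_ne (p1_ne_p2 h4 hev hv))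
  constructor
  · exact ⟨hv, p1_lt h4 hev hv, by rw [← SimpleGraph.mem_neighborSet, heq]; simp⟩
  · exact ⟨hv, p2_lt h4 hev hv, by rw [← SimpleGraph.mem_neighborSet, heq]; simp⟩

lemma force1 {v : ℕ} (hv : v < ℓ) (h : ¬ hadj H v (p1 ℓ v)) :
    hadj H v (p0 v) ∧ hadj H v (p2 ℓ v) := by
  have hsub := nbr_sub h4 hev hle (⟨v, hv⟩ : Fin ℓ)
  have hsub' : H.neighborSet ⟨v, hv⟩ ⊆
      {⟨p0 v, p0_lt h4 hev hv⟩, ⟨p1 ℓ v, p1_lt h4 hev hv⟩, ⟨p2 ℓ v, p2_lt h4 hev hv⟩} := hsub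
  have hnm : (⟨p1 ℓ v, p1_lt h4 hev hv⟩ : Fin ℓ) ∉ H.neighborSet ⟨v, hv⟩ := by
    intro hm; exact h ⟨hv, p1_lt h4 hev hv, hm⟩
  have heq := eq_of_not_mem3 (hdeg ⟨v, hv⟩) hsub' hnm
    (Fin.ne_of_val_ne (p0_ne_p2 h4 hev hv))
  constructor
  · exact ⟨hv, p0_lt h4 hev hv, by rw [← SimpleGraph.mem_neighborSet, heq]; simp⟩
  · exact ⟨hv, p2_lt h4 hev hv, by rw [← SimpleGraph.mem_neighborSet, heq]; simp⟩

lemma force2 {v : ℕ} (hv : v < ℓ) (h : ¬ hadj H v (p2 ℓ v)) :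
    hadj H v (p0 v) ∧ hadj H v (p1 ℓ v) := by
  have hsub := nbr_sub h4 hev hle (⟨v, hv⟩ : Fin ℓ)
  have hsub' : H.neighborSet ⟨v, hv⟩ ⊆
      {⟨p0 v, p0_lt h4 hev hv⟩, ⟨p2 ℓ v, p2_lt h4 hev hv⟩, ⟨p1 ℓ v, p1_lt h4 hev hv⟩} := by
    intro w hw; have := hsub hw; simp only [Set.mem_insert_iff, Set.mem_singleton_iff] at *
    tauto
  have hnm : (⟨p2 ℓ v, p2_lt h4 hev hv⟩ : Fin ℓ) ∉ H.neighborSet ⟨v, hv⟩ := by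
    intro hm; exact h ⟨hv, p2_lt h4 hev hv, hm⟩
  have heq := eq_of_not_mem3 (hdeg ⟨v, hv⟩) hsub' hnm
    (Fin.ne_of_val_ne (p0_ne_p1 h4 hev hv))
  constructor
  · exact ⟨hv, p0_lt h4 hev hv, by rw [← SimpleGraph.mem_neighborSet, heq]; simp⟩
  · exact ⟨hv, p1_lt h4 hev hv, by rw [← SimpleGraph.mem_neighborSet, heq]; simp⟩

omit h4 hev hle

/-- a vertex with two known neighbors has no third one -/
lemma not_of_full {v a b c : ℕ} (hv : v < ℓ) (ha : hadj H v a) (hb : hadj H v b)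
    (hab : a ≠ b) (hca : c ≠ a) (hcb : c ≠ b) : ¬ hadj H v c := by
  obtain ⟨hv1, ha1, hadja⟩ := ha
  obtain ⟨hv2, hb1, hadjb⟩ := hb
  rintro ⟨hv3, hc1, hadjc⟩
  have hpair := pair_of_two (hdeg ⟨v, hv⟩)
    (by exact hadja : (⟨a, ha1⟩ : Fin ℓ) ∈ H.neighborSet ⟨v, hv⟩)
    (by exact hadjb : (⟨b, hb1⟩ : Fin ℓ) ∈ H.neighborSet ⟨v, hv⟩)
    (Fin.ne_of_val_ne hab)
  have : (⟨c, hc1⟩ : Fin ℓ) ∈ H.neighborSet ⟨v, hv⟩ := by exact hadjc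
  rw [hpair] at this
  simp only [Set.mem_insert_iff, Set.mem_singleton_iff, Fin.mk.injEq] at this
  tauto

/-- a vertex with two known neighbors: every neighbor is one of them -/
lemma nbr_vals {v a b : ℕ} (hv : v < ℓ) (ha : hadj H v a) (hb : hadj H v b)
    (hab : a ≠ b) : ∀ w : Fin ℓ, H.Adj ⟨v, hv⟩ w → w.val = a ∨ w.val = b := by
  obtain ⟨hv1, ha1, hadja⟩ := ha
  obtain ⟨hv2, hb1, hadjb⟩ := hb
  intro w hw
  have hpair := pair_of_two (hdeg ⟨v, hv⟩)
    (by exact hadja : (⟨a, ha1⟩ : Fin ℓ) ∈ H.neighborSet ⟨v, hv⟩)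
    (by exact hadjb : (⟨b, hb1⟩ : Fin ℓ) ∈ H.neighborSet ⟨v, hv⟩)
    (Fin.ne_of_val_ne hab)
  have : w ∈ H.neighborSet ⟨v, hv⟩ := hw
  rw [hpair] at this
  simp only [Set.mem_insert_iff, Set.mem_singleton_iff] at this
  rcases this with rfl | rfl
  · exact Or.inl rfl
  · exact Or.inr rfl

end converse

section chains
variable {ℓ : ℕ} (h4 : 4 ≤ ℓ) (hev : ℓ % 2 = 0) {H : SimpleGraph (Fin ℓ)}
  (hle : H ≤ FG ℓ) (hdeg : ∀ v, (H.neighborSet v).ncard = 2)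

include h4 hev hle hdeg

/-- Case C : at `0`, the `M1`-edge `(0,2)` is missing.  Forced chain:
`(2i+1,2i+2) ∈ H` and `(2i+2,2i+3) ∈ H` for all `i` with `2i+2 ≤ ℓ-2`. -/
lemma chainC (h01 : hadj H 0 1) (h0l : hadj H 0 (ℓ - 1)) (hn2 : ¬ hadj H 0 2) :
    ∀ i, 2 * i + 2 ≤ ℓ - 2 → hadj H (2 * i + 1) (2 * i + 2) ∧
      hadj H (2 * i + 2) (2 * i + 3) := by
  intro i
  induction i using Nat.strong_induction_on with
  | _ i ih =>
    intro hi
    have hv : 2 * i + 2 < ℓ := by omega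
    -- the p1-partner of 2i+2 is excluded
    have hex : ¬ hadj H (2 * i + 2) (p1 ℓ (2 * i + 2)) := by
      have hcase : i = 0 ∨ i = 1 ∨ 2 ≤ i := by omega
      rcases hcase with rfl | rfl | hi2
      · -- p1 2 = 0 ; excluded since ¬ hadj 0 2
        have hp : p1 ℓ (2 * 0 + 2) = 0 := by unfold p1; split_ifs <;> first | omega | tauto
        rw [hp]
        intro hc; exact hn2 (hadj_symm hc)
      · -- p1 4 = 1 ; vertex 1 is full with {0, 2}
        have hp : p1 ℓ (2 * 1 + 2) = 1 := by unfold p1; split_ifs <;> first | omega | tauto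
        rw [hp]
        have hE0 := ih 0 (show 0 < 1 by omega) (show 2*0+2 ≤ ℓ - 2 by omega)
        have hfull := not_of_full (c := 2*1+2) hdeg (show (1:ℕ) < ℓ by omega) (hadj_symm h01)
          hE0.1 (by omega) (by omega) (by omega)
        intro hc; exact hfull (hadj_symm hc)
      · -- p1 (2i+2) = 2i-1 ; vertex 2i-1 is full with {2i-2, 2i}
        have hp : p1 ℓ (2 * i + 2) = 2 * i - 1 := by
          unfold p1; split_ifs <;> first | omega | tauto
        rw [hp]
        have ha1 : hadj H (2 * i - 1) (2 * i - 2) := by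
          have := (ih (i - 2) (by omega) (by omega)).2
          have e1 : 2 * (i - 2) + 2 = 2 * i - 2 := by omega
          have e2 : 2 * (i - 2) + 3 = 2 * i - 1 := by omega
          rw [e1, e2] at this
          exact hadj_symm this
        have ha2 : hadj H (2 * i - 1) (2 * i) := by
          have := (ih (i - 1) (by omega) (by omega)).1
          have e1 : 2 * (i - 1) + 1 = 2 * i - 1 := by omega
          have e2 : 2 * (i - 1) + 2 = 2 * i := by omega
          rw [e1, e2] at this
          exact this
        have hfull := not_of_full hdeg (show 2 * i - 1 < ℓ by omega) ha1 ha2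
          (by omega) (show 2 * i + 2 ≠ 2 * i - 2 by omega) (by omega)
        intro hc; exact hfull (hadj_symm hc)
    obtain ⟨hA, hB⟩ := force1 h4 hev hle hdeg hv hex
    have hq0 : p0 (2 * i + 2) = 2 * i + 3 := by unfold p0; split_ifs <;> first | omega | tauto
    have hq2 : p2 ℓ (2 * i + 2) = 2 * i + 1 := by
      unfold p2; split_ifs <;> first | omega | tauto
    rw [hq0] at hA
    rw [hq2] at hB
    exact ⟨hadj_symm hB, hA⟩

/-- Case B : at `0`, the `M0`-edge `(0,1)` is missing.  Forced chain:
`(2i+1,2i+2) ∈ H` and `(2i+1, p1(2i+1)) ∈ H` for all odd vertices `2i+1 ≤ ℓ-3`. -/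
lemma chainB (hn1 : ¬ hadj H 0 1) (h02 : hadj H 0 2) (h0l : hadj H 0 (ℓ - 1)) :
    ∀ i, 2 * i + 1 ≤ ℓ - 3 → hadj H (2 * i + 1) (2 * i + 2) ∧
      hadj H (2 * i + 1) (p1 ℓ (2 * i + 1)) := by
  intro i
  induction i using Nat.strong_induction_on with
  | _ i ih =>
    intro hi
    have hv : 2 * i + 1 < ℓ := by omega
    have hex : ¬ hadj H (2 * i + 1) (2 * i) := by
      have hcase : i = 0 ∨ i = 1 ∨ 2 ≤ i := by omega
      rcases hcase with rfl | rfl | hi2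
      · intro hc; exact hn1 (hadj_symm hc)
      · -- vertex 2 is full with {3, 0}
        have hB0 := ih 0 (by omega) (by omega)
        have hfull := not_of_full (c := 2*1+1) hdeg (show 2*1 < ℓ by omega)
          (hadj_symm hB0.1) (hadj_symm h02) (by omega) (by omega) (by omega)
        intro hc; exact hfull (hadj_symm hc)
      · -- vertex 2i is full with {2i-1, 2i-3}
        have hB1 := ih (i - 1) (by omega) (by omega)
        have ha1 : hadj H (2 * i) (2 * i - 1) := by
          have := hB1.1
          have e1 : 2 * (i - 1) + 1 = 2 * i - 1 := by omega
          have e2 : 2 * (i - 1) + 2 = 2 * i := by omega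
          rw [e1, e2] at this
          exact hadj_symm this
        have ha2 : hadj H (2 * i) (2 * i - 3) := by
          have hB2 := ih (i - 2) (by omega) (by omega)
          have := hB2.2
          have e1 : 2 * (i - 2) + 1 = 2 * i - 3 := by omega
          have e2 : p1 ℓ (2 * (i - 2) + 1) = 2 * i := by
            unfold p1; split_ifs <;> first | omega | tauto
          rw [e2, e1] at this
          exact hadj_symm this
        have hfull := not_of_full (c := 2*i+1) hdeg (show 2*i < ℓ by omega)
          ha1 ha2 (by omega) (by omega) (by omega)
        intro hc; exact hfull (hadj_symm hc)
    have hex' : ¬ hadj H (2 * i + 1) (p0 (2 * i + 1)) := by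
      have hp : p0 (2 * i + 1) = 2 * i := by unfold p0; split_ifs <;> first | omega | tauto
      rw [hp]; exact hex
    obtain ⟨hA, hB⟩ := force0 h4 hev hle hdeg hv hex'
    have hq2 : p2 ℓ (2 * i + 1) = 2 * i + 2 := by
      unfold p2; split_ifs <;> first | omega | tauto
    rw [hq2] at hB
    exact ⟨hB, hA⟩

/-- Case A : at `0`, the `M2`-edge `(0,ℓ-1)` is missing.  Forced chain (uses
connectivity): `(2j+1,2j+4) ∈ H` and `(2j+2,2j+3) ∈ H` for `2j+6 ≤ ℓ`. -/
lemma chainA (hconn : H.Connected) (h01 : hadj H 0 1) (h02 : hadj H 0 2)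
    (hnl : ¬ hadj H 0 (ℓ - 1)) :
    ∀ j, 2 * j + 6 ≤ ℓ → hadj H (2 * j + 1) (2 * j + 4) ∧
      hadj H (2 * j + 2) (2 * j + 3) := by
  intro j
  induction j using Nat.strong_induction_on with
  | _ j ih =>
    intro hj
    have hnadj : ¬ hadj H (2 * j + 1) (2 * j + 2) := by
      by_contra hcon
      have hcl : ∀ u : Fin ℓ, u.val ≤ 2*j+2 → ∀ w : Fin ℓ, H.Adj u w →
          w.val ≤ 2*j+2 := by
        intro u hu w hw
        have finish : ∀ a b : ℕ, hadj H u.val a → hadj H u.val b → a ≠ b →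
            a ≤ 2*j+2 → b ≤ 2*j+2 → w.val ≤ 2*j+2 := by
          intro a b ha hb hab ha' hb'
          have := nbr_vals hdeg u.2 ha hb hab w (by exact hw)
          omega
        have hpar := Nat.even_or_odd u.val
        have hcase : u.val = 0 ∨ u.val = 1 ∨ u.val = 2 ∨
            (∃ i, 1 ≤ i ∧ i ≤ j ∧ u.val = 2*i+1) ∨
            (∃ i, 1 ≤ i ∧ i ≤ j ∧ u.val = 2*i+2) := by
          rcases hpar with he | ho
          · have hm := Nat.even_iff.mp he
            by_cases h0 : u.val = 0
            · exact Or.inl h0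
            · by_cases h2 : u.val = 2
              · exact Or.inr (Or.inr (Or.inl h2))
              · exact Or.inr (Or.inr (Or.inr (Or.inr
                  ⟨(u.val - 2)/2, by omega, by omega, by omega⟩)))
          · have hm := Nat.odd_iff.mp ho
            by_cases h1 : u.val = 1
            · exact Or.inr (Or.inl h1)
            · exact Or.inr (Or.inr (Or.inr (Or.inl
                ⟨(u.val - 1)/2, by omega, by omega, by omega⟩)))
        rcases hcase with hu0 | hu0 | hu0 | ⟨i, hi1, hij, hu0⟩ | ⟨i, hi1, hij, hu0⟩
        · exact finish 1 2 (by rw [hu0]; exact h01) (by rw [hu0]; exact h02)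
            (by omega) (by omega) (by omega)
        · by_cases hj0 : j = 0
          · refine finish 0 2 (by rw [hu0]; exact hadj_symm h01) ?_
              (by omega) (by omega) (by omega)
            subst hj0; rw [hu0]; exact hcon
          · refine finish 0 4 (by rw [hu0]; exact hadj_symm h01) ?_
              (by omega) (by omega) (by omega)
            rw [hu0]
            have h := (ih 0 (by omega) (by omega)).1
            have e1 : 2*0+1 = 1 := by omega
            have e2 : 2*0+4 = 4 := by omega
            rw [e1, e2] at h; exact h
        · by_cases hj0 : j = 0
          · refine finish 0 1 (by rw [hu0]; exact hadj_symm h02) ?_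
              (by omega) (by omega) (by omega)
            subst hj0; rw [hu0]; exact hadj_symm hcon
          · refine finish 0 3 (by rw [hu0]; exact hadj_symm h02) ?_
              (by omega) (by omega) (by omega)
            rw [hu0]
            have h := (ih 0 (by omega) (by omega)).2
            have e1 : 2*0+2 = 2 := by omega
            have e2 : 2*0+3 = 3 := by omega
            rw [e1, e2] at h; exact h
        · -- u = 2i+1, 1 ≤ i ≤ j
          have ha : hadj H u.val (2*i) := by
            rw [hu0]
            have h := (ih (i-1) (by omega) (by omega)).2
            have e1 : 2*(i-1)+2 = 2*i := by omega
            have e2 : 2*(i-1)+3 = 2*i+1 := by omega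
            rw [e1, e2] at h; exact hadj_symm h
          by_cases hijeq : i = j
          · refine finish (2*i) (2*i+2) ha ?_ (by omega) (by omega) (by omega)
            rw [hu0, hijeq]; exact hcon
          · refine finish (2*i) (2*i+4) ha ?_ (by omega) (by omega) (by omega)
            rw [hu0]
            exact (ih i (by omega) (by omega)).1
        · -- u = 2i+2, 1 ≤ i ≤ j
          have ha : hadj H u.val (2*i-1) := by
            rw [hu0]
            have h := (ih (i-1) (by omega) (by omega)).1
            have e1 : 2*(i-1)+1 = 2*i-1 := by omega
            have e2 : 2*(i-1)+4 = 2*i+2 := by omega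
            rw [e1, e2] at h; exact hadj_symm h
          by_cases hijeq : i = j
          · refine finish (2*i-1) (2*i+1) ha ?_ (by omega) (by omega) (by omega)
            rw [hu0, hijeq]; exact hadj_symm hcon
          · refine finish (2*i-1) (2*i+3) ha ?_ (by omega) (by omega) (by omega)
            rw [hu0]
            exact (ih i (by omega) (by omega)).2
      have hreach := hconn.preconnected ⟨0, by omega⟩ ⟨2*j+3, by omega⟩
      have hmem := closed_of_reach (S := {v : Fin ℓ | v.val ≤ 2*j+2})
        (fun u hu w hw => hcl u hu w hw) hreach (by show (0:ℕ) ≤ 2*j+2; omega)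
      have : (2*j+3 : ℕ) ≤ 2*j+2 := hmem
      omega
    have hex : ¬ hadj H (2*j+1) (p2 ℓ (2*j+1)) := by
      have hp : p2 ℓ (2*j+1) = 2*j+2 := by unfold p2; split_ifs <;> first | omega | tauto
      rw [hp]; exact hnadj
    obtain ⟨hA1, hA2⟩ := force2 h4 hev hle hdeg (show 2*j+1 < ℓ by omega) hex
    have hp1 : p1 ℓ (2*j+1) = 2*j+4 := by unfold p1; split_ifs <;> first | omega | tauto
    rw [hp1] at hA2
    have hex2 : ¬ hadj H (2*j+2) (p2 ℓ (2*j+2)) := by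
      have hp : p2 ℓ (2*j+2) = 2*j+1 := by unfold p2; split_ifs <;> first | omega | tauto
      rw [hp]; intro hc; exact hnadj (hadj_symm hc)
    obtain ⟨hB1, hB2⟩ := force2 h4 hev hle hdeg (show 2*j+2 < ℓ by omega) hex2
    have hp0 : p0 (2*j+2) = 2*j+3 := by unfold p0; split_ifs <;> first | omega | tauto
    rw [hp0] at hB1
    exact ⟨hA2, hB1⟩

/-- Case A: `H` contains every `M0`-edge and every `M1`-edge. -/
lemma caseA_cov (hconn : H.Connected) (h01 : hadj H 0 1) (h02 : hadj H 0 2)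
    (hnl : ¬ hadj H 0 (ℓ - 1)) :
    (∀ v, v < ℓ → hadj H v (p0 v)) ∧ (∀ v, v < ℓ → hadj H v (p1 ℓ v)) := by
  have hA := chainA h4 hev hle hdeg hconn h01 h02 hnl
  -- endgame at ℓ-1
  have hexl : ¬ hadj H (ℓ-1) (p2 ℓ (ℓ-1)) := by
    have hp : p2 ℓ (ℓ-1) = 0 := by unfold p2; split_ifs <;> first | omega | tauto
    rw [hp]; intro hc; exact hnl (hadj_symm hc)
  obtain ⟨eA1, eA2⟩ := force2 h4 hev hle hdeg (show ℓ-1 < ℓ by omega) hexl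
  rw [show p0 (ℓ-1) = ℓ-2 by unfold p0; split_ifs <;> first | omega | tauto] at eA1
  rw [show p1 ℓ (ℓ-1) = ℓ-3 by unfold p1; split_ifs <;> first | omega | tauto] at eA2
  have key0 : ∀ k, k % 2 = 0 → k < ℓ → hadj H k (k+1) := by
    intro k hk hkl
    by_cases hk0 : k = 0
    · rw [hk0]; exact h01
    · by_cases hke : k = ℓ - 2
      · have e : k + 1 = ℓ - 1 := by omega
        rw [e, hke]; exact hadj_symm eA1
      · have h := (hA ((k-2)/2) (by omega)).2
        have e1 : 2*((k-2)/2)+2 = k := by omega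
        have e2 : 2*((k-2)/2)+3 = k+1 := by omega
        rw [e1, e2] at h; exact h
  have keyCh : ∀ k, k % 2 = 1 → k + 5 ≤ ℓ → hadj H k (k+3) := by
    intro k hk hkl
    have h := (hA ((k-1)/2) (by omega)).1
    have e1 : 2*((k-1)/2)+1 = k := by omega
    have e2 : 2*((k-1)/2)+4 = k+3 := by omega
    rw [e1, e2] at h; exact h
  constructor
  · intro v hv
    rcases Nat.even_or_odd v with he | ho
    · have hm := Nat.even_iff.mp he
      rw [show p0 v = v+1 by unfold p0; split_ifs <;> first | omega | tauto]
      exact key0 v hm hv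
    · have hm := Nat.odd_iff.mp ho
      rw [show p0 v = v-1 by unfold p0; split_ifs <;> first | omega | tauto]
      have h := key0 (v-1) (by omega) (by omega)
      rw [show v-1+1 = v by omega] at h
      exact hadj_symm h
  · intro v hv
    by_cases h0 : v = 0
    · rw [h0, show p1 ℓ 0 = 2 by unfold p1; split_ifs <;> first | omega | tauto]
      exact h02
    · by_cases h2 : v = 2
      · rw [h2, show p1 ℓ 2 = 0 by unfold p1; split_ifs <;> first | omega | tauto]
        exact hadj_symm h02
      · by_cases hl3 : v = ℓ - 3
        · rw [hl3, show p1 ℓ (ℓ-3) = ℓ-1 by unfold p1; split_ifs <;> first | omega | tauto]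
          exact hadj_symm eA2
        · by_cases hl1 : v = ℓ - 1
          · rw [hl1, show p1 ℓ (ℓ-1) = ℓ-3 by unfold p1; split_ifs <;> first | omega | tauto]
            exact eA2
          · rcases Nat.even_or_odd v with he | ho
            · have hm := Nat.even_iff.mp he
              rw [show p1 ℓ v = v-3 by unfold p1; split_ifs <;> first | omega | tauto]
              have h := keyCh (v-3) (by omega) (by omega)
              rw [show v-3+3 = v by omega] at h
              exact hadj_symm h
            · have hm := Nat.odd_iff.mp ho
              rw [show p1 ℓ v = v+3 by unfold p1; split_ifs <;> first | omega | tauto]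
              exact keyCh v hm (by omega)

/-- Case B: `H` contains every `M1`-edge and every `M2`-edge. -/
lemma caseB_cov (hn1 : ¬ hadj H 0 1) (h02 : hadj H 0 2) (h0l : hadj H 0 (ℓ - 1)) :
    (∀ v, v < ℓ → hadj H v (p1 ℓ v)) ∧ (∀ v, v < ℓ → hadj H v (p2 ℓ v)) := by
  have hB := chainB h4 hev hle hdeg hn1 h02 h0l
  have keyB1 : ∀ k, k % 2 = 1 → k ≤ ℓ - 3 → hadj H k (k+1) := by
    intro k hk hkl
    have h := (hB ((k-1)/2) (by omega)).1
    have e1 : 2*((k-1)/2)+1 = k := by omega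
    have e2 : 2*((k-1)/2)+2 = k+1 := by omega
    rw [e1, e2] at h; exact h
  have keyB2 : ∀ k, k % 2 = 1 → k ≤ ℓ - 3 → hadj H k (p1 ℓ k) := by
    intro k hk hkl
    have h := (hB ((k-1)/2) (by omega)).2
    have e1 : 2*((k-1)/2)+1 = k := by omega
    rw [e1] at h; exact h
  constructor
  · intro v hv
    by_cases h0 : v = 0
    · rw [h0, show p1 ℓ 0 = 2 by unfold p1; split_ifs <;> first | omega | tauto]
      exact h02
    · by_cases h2 : v = 2
      · rw [h2, show p1 ℓ 2 = 0 by unfold p1; split_ifs <;> first | omega | tauto]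
        exact hadj_symm h02
      · rcases Nat.even_or_odd v with he | ho
        · have hm := Nat.even_iff.mp he
          rw [show p1 ℓ v = v-3 by unfold p1; split_ifs <;> first | omega | tauto]
          have h := keyB2 (v-3) (by omega) (by omega)
          rw [show p1 ℓ (v-3) = v by unfold p1; split_ifs <;> first | omega | tauto] at h
          exact hadj_symm h
        · have hm := Nat.odd_iff.mp ho
          by_cases hl1 : v = ℓ - 1
          · rw [hl1, show p1 ℓ (ℓ-1) = ℓ-3 by unfold p1; split_ifs <;> first | omega | tauto]
            have h := keyB2 (ℓ-3) (by omega) (by omega)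
            rw [show p1 ℓ (ℓ-3) = ℓ-1 by unfold p1; split_ifs <;> first | omega | tauto] at h
            exact hadj_symm h
          · exact keyB2 v hm (by omega)
  · intro v hv
    by_cases h0 : v = 0
    · rw [h0, show p2 ℓ 0 = ℓ-1 by unfold p2; split_ifs <;> first | omega | tauto]
      exact h0l
    · by_cases hl1 : v = ℓ - 1
      · rw [hl1, show p2 ℓ (ℓ-1) = 0 by unfold p2; split_ifs <;> first | omega | tauto]
        exact hadj_symm h0l
      · rcases Nat.even_or_odd v with he | ho
        · have hm := Nat.even_iff.mp he
          rw [show p2 ℓ v = v-1 by unfold p2; split_ifs <;> first | omega | tauto]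
          have h := keyB1 (v-1) (by omega) (by omega)
          rw [show v-1+1 = v by omega] at h
          exact hadj_symm h
        · have hm := Nat.odd_iff.mp ho
          rw [show p2 ℓ v = v+1 by unfold p2; split_ifs <;> first | omega | tauto]
          exact keyB1 v hm (by omega)

/-- Case C: `H` contains every `M0`-edge and every `M2`-edge. -/
lemma caseC_cov (h01 : hadj H 0 1) (h0l : hadj H 0 (ℓ - 1)) (hn2 : ¬ hadj H 0 2) :
    (∀ v, v < ℓ → hadj H v (p0 v)) ∧ (∀ v, v < ℓ → hadj H v (p2 ℓ v)) := by
  have hE := chainC h4 hev hle hdeg h01 h0l hn2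
  have keyC : ∀ k, k < ℓ - 1 → hadj H k (k+1) := by
    intro k hkl
    rcases Nat.even_or_odd k with he | ho
    · have hm := Nat.even_iff.mp he
      by_cases hk0 : k = 0
      · rw [hk0]; exact h01
      · have h := (hE ((k-2)/2) (by omega)).2
        have e1 : 2*((k-2)/2)+2 = k := by omega
        have e2 : 2*((k-2)/2)+3 = k+1 := by omega
        rw [e1, e2] at h; exact h
    · have hm := Nat.odd_iff.mp ho
      have h := (hE ((k-1)/2) (by omega)).1
      have e1 : 2*((k-1)/2)+1 = k := by omega
      have e2 : 2*((k-1)/2)+2 = k+1 := by omega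
      rw [e1, e2] at h; exact h
  constructor
  · intro v hv
    rcases Nat.even_or_odd v with he | ho
    · have hm := Nat.even_iff.mp he
      rw [show p0 v = v+1 by unfold p0; split_ifs <;> first | omega | tauto]
      exact keyC v (by omega)
    · have hm := Nat.odd_iff.mp ho
      rw [show p0 v = v-1 by unfold p0; split_ifs <;> first | omega | tauto]
      have h := keyC (v-1) (by omega)
      rw [show v-1+1 = v by omega] at h
      exact hadj_symm h
  · intro v hv
    by_cases h0 : v = 0
    · rw [h0, show p2 ℓ 0 = ℓ-1 by unfold p2; split_ifs <;> first | omega | tauto]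
      exact h0l
    · by_cases hl1 : v = ℓ - 1
      · rw [hl1, show p2 ℓ (ℓ-1) = 0 by unfold p2; split_ifs <;> first | omega | tauto]
        exact hadj_symm h0l
      · rcases Nat.even_or_odd v with he | ho
        · have hm := Nat.even_iff.mp he
          rw [show p2 ℓ v = v-1 by unfold p2; split_ifs <;> first | omega | tauto]
          have h := keyC (v-1) (by omega)
          rw [show v-1+1 = v by omega] at h
          exact hadj_symm h
        · have hm := Nat.odd_iff.mp ho
          rw [show p2 ℓ v = v+1 by unfold p2; split_ifs <;> first | omega | tauto]
          exact keyC v (by omega)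

omit h4 hev hle hdeg in
lemma le_of_all {p : ℕ → ℕ} (hall : ∀ v, v < ℓ → hadj H v (p v)) : Mg ℓ p ≤ H := by
  intro a b hab
  obtain ⟨hne, hh⟩ := hab
  rcases hh with h | h
  · obtain ⟨x, y, hxy⟩ := hall a.val a.2
    have hb2 : b = ⟨p a.val, y⟩ := Fin.ext h
    rw [hb2]; exact hxy
  · obtain ⟨x, y, hxy⟩ := hall b.val b.2
    have ha2 : a = ⟨p b.val, y⟩ := Fin.ext h
    rw [ha2]; exact hxy.symm

/-- every connected 2-regular subgraph of `FG ℓ` is the union of two of the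
three matchings -/
lemma converse_main (hconn : H.Connected) :
    H = Mg ℓ p0 ⊔ Mg ℓ (p1 ℓ) ∨ H = Mg ℓ p0 ⊔ Mg ℓ (p2 ℓ) ∨
      H = Mg ℓ (p1 ℓ) ⊔ Mg ℓ (p2 ℓ) := by
  have h0lt : (0:ℕ) < ℓ := by omega
  by_cases e1 : hadj H 0 1
  · by_cases e2 : hadj H 0 2
    · -- case A
      have hnl : ¬ hadj H 0 (ℓ-1) := not_of_full (c := ℓ-1) hdeg h0lt e1 e2
        (by omega) (by omega) (by omega)
      obtain ⟨c0, c1⟩ := caseA_cov h4 hev hle hdeg hconn e1 e2 hnl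
      left
      exact eq_of_le_two (sup_le (le_of_all c0) (le_of_all c1))
        (fun v => deg01 h4 hev v) hdeg
    · -- case C
      have hex : ¬ hadj H 0 (p1 ℓ 0) := by
        rw [show p1 ℓ 0 = 2 by unfold p1; split_ifs <;> first | omega | tauto]
        exact e2
      obtain ⟨f0, f2⟩ := force1 h4 hev hle hdeg h0lt hex
      rw [show p0 0 = 1 by unfold p0; split_ifs <;> first | omega | tauto] at f0
      rw [show p2 ℓ 0 = ℓ-1 by unfold p2; split_ifs <;> first | omega | tauto] at f2
      obtain ⟨c0, c2⟩ := caseC_cov h4 hev hle hdeg f0 f2 e2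
      right; left
      exact eq_of_le_two (sup_le (le_of_all c0) (le_of_all c2))
        (fun v => deg02 h4 hev v) hdeg
  · -- case B
    have hex : ¬ hadj H 0 (p0 0) := by
      rw [show p0 0 = 1 by unfold p0; split_ifs <;> first | omega | tauto]
      exact e1
    obtain ⟨f1, f2⟩ := force0 h4 hev hle hdeg h0lt hex
    rw [show p1 ℓ 0 = 2 by unfold p1; split_ifs <;> first | omega | tauto] at f1
    rw [show p2 ℓ 0 = ℓ-1 by unfold p2; split_ifs <;> first | omega | tauto] at f2
    obtain ⟨c1, c2⟩ := caseB_cov h4 hev hle hdeg e1 f1 f2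
    right; right
    exact eq_of_le_two (sup_le (le_of_all c1) (le_of_all c2))
      (fun v => deg12 h4 hev v) hdeg

end chains

end Flawless
open Flawless in
/-- for every even `ℓ ≥ 4` there is a `3`-regular graph `F` on `ℓ`
vertices whose edge set is partitioned into three perfect matchings `M 0, M 1, M 2`
such that the union of any two of them is a Hamiltonian cycle of `F`
(a connected 2-regular spanning subgraph), and conversely every Hamiltonian cycle
of `F` is the union of two of the matchings.  (I.e. `f(ℓ) ≥ 3`: `F` admits a
flawless 1-factorization.) -/
theorem stmt_7 (ℓ : ℕ) (h4 : 4 ≤ ℓ) (heven : Even ℓ) :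
    ∃ (F : SimpleGraph (Fin ℓ)) (M : Fin 3 → SimpleGraph (Fin ℓ)),
      (∀ i, M i ≤ F) ∧
      (∀ i v, ((M i).neighborSet v).ncard = 1) ∧
      (∀ i j, i ≠ j → Disjoint (M i).edgeSet (M j).edgeSet) ∧
      (F = M 0 ⊔ M 1 ⊔ M 2) ∧
      (∀ v, (F.neighborSet v).ncard = 3) ∧
      (∀ i j, i ≠ j →
        (M i ⊔ M j).Connected ∧ ∀ v, ((M i ⊔ M j).neighborSet v).ncard = 2) ∧
      (∀ H : SimpleGraph (Fin ℓ), H ≤ F → H.Connected →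
        (∀ v, (H.neighborSet v).ncard = 2) → ∃ i j, i ≠ j ∧ H = M i ⊔ M j) := by
  classical
  have hev : ℓ % 2 = 0 := Nat.even_iff.mp heven
  refine ⟨FG ℓ, ![Mg ℓ p0, Mg ℓ (p1 ℓ), Mg ℓ (p2 ℓ)], ?_, ?_, ?_, ?_, ?_, ?_, ?_⟩
  · intro i
    fin_cases i
    · exact le_sup_of_le_left le_sup_left
    · exact le_sup_of_le_left le_sup_right
    · exact le_sup_right
  · intro i v
    fin_cases i
    · show ((Mg ℓ p0).neighborSet v).ncard = 1
      rw [nbr0 h4 hev]; exact Set.ncard_singleton _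
    · show ((Mg ℓ (p1 ℓ)).neighborSet v).ncard = 1
      rw [nbr1 h4 hev]; exact Set.ncard_singleton _
    · show ((Mg ℓ (p2 ℓ)).neighborSet v).ncard = 1
      rw [nbr2 h4 hev]; exact Set.ncard_singleton _
  · have d01 := Mg_disj h4 hev (fun v hv => p0_invol)
      (fun v hv => p1_invol h4 hev hv) (fun v hv => p0_ne_p1 h4 hev hv)
    have d02 := Mg_disj h4 hev (fun v hv => p0_invol)
      (fun v hv => p2_invol h4 hev hv) (fun v hv => p0_ne_p2 h4 hev hv)
    have d12 := Mg_disj h4 hev (fun v hv => p1_invol h4 hev hv)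
      (fun v hv => p2_invol h4 hev hv) (fun v hv => p1_ne_p2 h4 hev hv)
    intro i j hij
    fin_cases i <;> fin_cases j <;> first
      | exact absurd rfl hij
      | exact d01 | exact d02 | exact d12
      | exact d01.symm | exact d02.symm | exact d12.symm
  · rfl
  · exact fun v => degF h4 hev v
  · have c01 : ((Mg ℓ p0) ⊔ (Mg ℓ (p1 ℓ))).Connected ∧
        ∀ v, (((Mg ℓ p0) ⊔ (Mg ℓ (p1 ℓ))).neighborSet v).ncard = 2 :=
      ⟨conn01 h4 hev, fun v => deg01 h4 hev v⟩
    have c02 : ((Mg ℓ p0) ⊔ (Mg ℓ (p2 ℓ))).Connected ∧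
        ∀ v, (((Mg ℓ p0) ⊔ (Mg ℓ (p2 ℓ))).neighborSet v).ncard = 2 :=
      ⟨conn02 h4 hev, fun v => deg02 h4 hev v⟩
    have c12 : ((Mg ℓ (p1 ℓ)) ⊔ (Mg ℓ (p2 ℓ))).Connected ∧
        ∀ v, (((Mg ℓ (p1 ℓ)) ⊔ (Mg ℓ (p2 ℓ))).neighborSet v).ncard = 2 :=
      ⟨conn12 h4 hev, fun v => deg12 h4 hev v⟩
    intro i j hij
    fin_cases i <;> fin_cases j <;> first
      | exact absurd rfl hij
      | exact c01 | exact c02 | exact c12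
      | (rw [sup_comm]; exact c01)
      | (rw [sup_comm]; exact c02)
      | (rw [sup_comm]; exact c12)
  · intro H hle hconn hdeg
    rcases converse_main h4 hev hle hdeg hconn with h | h | h
    · exact ⟨0, 1, by decide, h⟩
    · exact ⟨0, 2, by decide, h⟩
    · exact ⟨1, 2, by decide, h⟩
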